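/- Let F be a finite argumentation framework, σ an extension semantics, and define the two-level extension ranking ⊒^σ by X ⊒^σ Y iff X ∈ σ(F) and Y ∉ σ(F). If ξ is a social ranking function satisfying Pareto-efficiency, x is credulously accepted (x ∈ X for some X ∈ σ(F)), y is rejected (y ∉ Y for all Y ∈ σ(F)), and σ(F) is nonempty, then x ≻^ξ_{⊒^σ} y. -/

import Mathlib

/-- Strict part of a relation on sets of elements. -/
def strictPart {α : Type*} (r : Finset α → Finset α → Prop) (X Y : Finset α) : Prop :=
  r X Y ∧ ¬ r Y X

/-- There is a strict chain `X₁ ⊐ X₂ ⊐ ⋯ ⊐ Xₙ ⊐ X` of length `n` above `X`. -/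
def ChainAbove {α : Type*} (r : Finset α → Finset α → Prop) (X : Finset α) (n : ℕ) : Prop :=
  ∃ l : List (Finset α), l.length = n ∧ List.Chain' (strictPart r) (l ++ [X])

/-- The rank of a set: one plus the maximal length of a strict chain above it. -/
noncomputable def rank {α : Type*} (r : Finset α → Finset α → Prop) (X : Finset α) : ℕ :=
  sSup {n | ChainAbove r X n} + 1
/-- Strict part of a preorder on elements. -/
def sp {β : Type*} (p : β → β → Prop) (x y : β) : Prop := p x y ∧ ¬ p y x

/-- A social ranking function maps rankings over sets to rankings over elements. -/
def SRF (α : Type*) := (Finset α → Finset α → Prop) → α → α → Prop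

/-- Maximal rank of any set under `r`. -/
noncomputable def maxRank {α : Type*} (r : Finset α → Finset α → Prop) : ℕ :=
  sSup (Set.range (rank r))

/-- Pareto-efficiency of a social ranking function. -/
def ParetoEfficient {α : Type*} [DecidableEq α] (ξ : SRF α) : Prop :=
  ∀ r : Finset α → Finset α → Prop, ∀ x y : α,
    (∀ Z : Finset α, x ∉ Z → y ∉ Z → rank r (insert x Z) ≤ rank r (insert y Z)) →
    (∃ Z : Finset α, x ∉ Z ∧ y ∉ Z ∧ rank r (insert x Z) < rank r (insert y Z)) →
    sp (ξ r) x y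

/-- Independence from the worst set. -/
def IndepWorstSet {α : Type*} (ξ : SRF α) : Prop :=
  ∀ r r' : Finset α → Finset α → Prop,
    (∀ X : Finset α, rank r X < maxRank r → rank r' X = rank r X) →
    (∀ X : Finset α, rank r X = maxRank r → maxRank r ≤ rank r' X) →
    ∀ x y : α, sp (ξ r) x y → sp (ξ r') x y

/-- Dominating set axiom. -/
def DominatingSet {α : Type*} (ξ : SRF α) : Prop :=
  ∀ r : Finset α → Finset α → Prop, ∀ x y : α,
    (∃ X : Finset α, x ∈ X ∧ ∀ Y : Finset α, y ∈ Y → strictPart r X Y) →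
    sp (ξ r) x y

/-- under the two-level extension ranking, a Pareto-efficient social
ranking function ranks every credulously accepted argument strictly above every
rejected one. -/
theorem stmt5 {α : Type*} [Fintype α] [DecidableEq α]
    (ext : Set (Finset α)) (hne : ext.Nonempty)
    (ξ : SRF α) (hP : ParetoEfficient ξ) (x y : α)
    (hx : ∃ X ∈ ext, x ∈ X) (hy : ∀ Y ∈ ext, y ∉ Y) :
    sp (ξ (fun X Y => X ∈ ext ∧ Y ∉ ext)) x y := by
  set r : Finset α → Finset α → Prop := fun X Y => X ∈ ext ∧ Y ∉ ext with hr
  have hsp : ∀ X Y, strictPart r X Y ↔ (X ∈ ext ∧ Y ∉ ext) := by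
    intro X Y
    constructor
    · rintro ⟨⟨h1, h2⟩, -⟩; exact ⟨h1, h2⟩
    · rintro ⟨h1, h2⟩; exact ⟨⟨h1, h2⟩, fun h => h2 h.1⟩
  have hca0 : ∀ X, ChainAbove r X 0 := fun X => ⟨[], rfl, List.isChain_singleton _⟩
  -- no chain above any set has length ≥ 2
  have hbound : ∀ X : Finset α, ∀ n ∈ {n | ChainAbove r X n}, n ≤ 1 := by
    rintro X n ⟨l, hl, hc⟩
    rcases l with _ | ⟨a, _ | ⟨b, rest⟩⟩
    · simp [← hl]
    · simp [← hl]
    · exfalso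
      simp only [List.Chain'] at hc
      rw [List.cons_append, List.cons_append, List.isChain_cons_cons] at hc
      obtain ⟨hab, hc⟩ := hc
      obtain ⟨c, t, hct⟩ : ∃ c t, rest ++ [X] = c :: t := by
        cases rest <;> exact ⟨_, _, rfl⟩
      rw [hct, List.isChain_cons_cons] at hc
      exact ((hsp a b).1 hab).2 ((hsp b c).1 hc.1).1
  -- if X ∈ ext, no nonempty chain above it
  have hlast : ∀ (l : List (Finset α)) (X : Finset α), l ≠ [] →
      List.Chain' (strictPart r) (l ++ [X]) → X ∉ ext := by
    intro l
    induction l with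
    | nil => intro X h; exact absurd rfl h
    | cons a t ih =>
      intro X _ hc
      cases t with
      | nil =>
        simp only [List.cons_append, List.nil_append, List.Chain', List.isChain_cons_cons] at hc
        exact ((hsp a X).1 hc.1).2
      | cons b s =>
        exact ih X (by simp) hc.tail
  have hrank1 : ∀ X, X ∈ ext → rank r X = 1 := by
    intro X hX
    have hs : {n | ChainAbove r X n} = {0} := by
      ext n
      simp only [Set.mem_setOf_eq, Set.mem_singleton_iff]
      constructor
      · rintro ⟨l, hl, hc⟩
        rcases l with _ | ⟨a, t⟩
        · simp [← hl]
        · exact absurd hX (hlast (a :: t) X (by simp) hc)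
      · rintro rfl; exact hca0 X
    rw [rank, hs, csSup_singleton]
  have hrank2 : ∀ X, X ∉ ext → rank r X = 2 := by
    intro X hX
    obtain ⟨E, hE⟩ := hne
    have h1 : ChainAbove r X 1 := ⟨[E], rfl, by
      simp only [List.cons_append, List.nil_append, List.Chain', List.isChain_cons_cons, List.isChain_singleton,
        and_true]
      exact (hsp E X).2 ⟨hE, hX⟩⟩
    have : sSup {n | ChainAbove r X n} = 1 := by
      apply le_antisymm
      · exact csSup_le ⟨0, hca0 X⟩ (hbound X)
      · exact le_csSup ⟨1, hbound X⟩ h1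
    rw [rank, this]
  have hrle : ∀ X, rank r X ≤ 2 := by
    intro X
    by_cases h : X ∈ ext
    · rw [hrank1 X h]; omega
    · rw [hrank2 X h]
  apply hP r x y
  · intro Z hxZ hyZ
    have : insert y Z ∉ ext := fun h => hy _ h (Finset.mem_insert_self y Z)
    rw [hrank2 _ this]
    exact hrle _
  · obtain ⟨X, hX, hxX⟩ := hx
    refine ⟨X.erase x, Finset.notMem_erase x X, ?_, ?_⟩
    · exact fun h => hy X hX (Finset.mem_of_mem_erase h)
    · rw [Finset.insert_erase hxX, hrank1 X hX,
        hrank2 _ (fun h => hy _ h (Finset.mem_insert_self y _))]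
      omega
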